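/- arXiv:2006.09858 — 3 statements merged into one kernel-verified Lean document; each statement's English description precedes it below -/
import Mathlib

section
/- A finite set {x_1,...,x_N} of distinct points in a metric space is ordinally dense (i.e., there exists n_0 such that the maximum distance from x_{n_0} to the other points is at most the minimum pairwise distance among the remaining N-1 points) if and only if its N-th ordinal spread equals C(N-1,2)+1. -/
/-- The `n`-th ordinal spread of a sorted index list `pairs`. -/
noncomputable def ordinalSpread {N : ℕ} (pairs : ℕ → Fin N × Fin N) (n : ℕ) : ℕ :=
  sInf {m | n ≤ ((Finset.range m).biUnion
    (fun r => ({(pairs r).1, (pairs r).2} : Finset (Fin N)))).card}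

/-- `pairs` is a list of all unordered index pairs of `[N]` sorted by decreasing distance
of the corresponding points of `x`. -/
def IsSortedIndexList {S : Type*} [MetricSpace S] {N : ℕ} (x : Fin N → S)
    (pairs : ℕ → Fin N × Fin N) : Prop :=
  (∀ r < N.choose 2, (pairs r).1 ≠ (pairs r).2) ∧
  (∀ i j : Fin N, i ≠ j →
    ∃ r < N.choose 2, ({(pairs r).1, (pairs r).2} : Finset (Fin N)) = {i, j}) ∧
  (∀ r < N.choose 2, ∀ s < N.choose 2, r ≠ s →
    ({(pairs r).1, (pairs r).2} : Finset (Fin N)) ≠ {(pairs s).1, (pairs s).2}) ∧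
  (∀ r s, r ≤ s → s < N.choose 2 →
    dist (x (pairs s).1) (x (pairs s).2) ≤ dist (x (pairs r).1) (x (pairs r).2))

/-- A point configuration is ordinally dense if some point's maximum distance to the
others is at most the minimum pairwise distance among the others. -/
def OrdinallyDense {S : Type*} [MetricSpace S] {N : ℕ} (x : Fin N → S) : Prop :=
  ∃ n₀ : Fin N, ∀ n, n ≠ n₀ → ∀ m k : Fin N, m ≠ n₀ → k ≠ n₀ → m ≠ k →
    dist (x n) (x n₀) ≤ dist (x m) (x k)

lemma pair_dist_eq {S : Type*} [MetricSpace S] {α : Type*} [DecidableEq α]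
    (x : α → S) {a b c d : α} (hab : a ≠ b) (h : ({a, b} : Finset α) = {c, d}) :
    dist (x a) (x b) = dist (x c) (x d) := by
  have ha : a = c ∨ a = d := by
    have : a ∈ ({c, d} : Finset α) := h ▸ (by simp)
    simpa using this
  have hb : b = c ∨ b = d := by
    have : b ∈ ({c, d} : Finset α) := h ▸ (by simp)
    simpa using this
  rcases ha with rfl | rfl
  · rcases hb with rfl | rfl
    · exact absurd rfl hab
    · rfl
  · rcases hb with rfl | rfl
    · exact dist_comm _ _
    · exact absurd rfl hab

theorem ordinally_dense_iff_max_ordinal_spread {S : Type*} [MetricSpace S]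
    (N : ℕ) (hN : 2 ≤ N) (x : Fin N → S)
    (hx : Function.Injective x)
    -- all pairwise distances are distinct
    (hdd : ∀ i j k l : Fin N, i ≠ j → k ≠ l →
      ({i, j} : Finset (Fin N)) ≠ {k, l} → dist (x i) (x j) ≠ dist (x k) (x l))
    (pairs : ℕ → Fin N × Fin N) (hpairs : IsSortedIndexList x pairs) :
    OrdinallyDense x ↔ ordinalSpread pairs N = (N - 1).choose 2 + 1 := by
  obtain ⟨h1, h2, h3, h4⟩ := hpairs
  set P := N.choose 2 with hP
  set Q := (N - 1).choose 2 with hQ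
  set ps : ℕ → Finset (Fin N) := fun r => {(pairs r).1, (pairs r).2} with hps
  set U : ℕ → Finset (Fin N) := fun m => (Finset.range m).biUnion ps with hU
  have hPQ : P = Q + (N - 1) := by
    have hN1 : N = (N - 1) + 1 := by omega
    rw [hP, hQ, hN1]
    rw [Nat.choose_succ_succ]
    simp [Nat.choose_one_right, Nat.add_comm]
  -- cardinality of the set of positions of pairs avoiding n₀
  have cardT : ∀ n₀ : Fin N,
      ((Finset.range P).filter (fun r => n₀ ∉ ps r)).card = Q := by
    intro n₀
    have : ((Finset.range P).filter (fun r => n₀ ∉ ps r)).card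
        = ((Finset.univ.erase n₀).powersetCard 2).card := by
      apply Finset.card_bij (fun r _ => ps r)
      · intro r hr
        simp only [Finset.mem_filter, Finset.mem_range] at hr
        rw [Finset.mem_powersetCard]
        constructor
        · intro a ha
          exact Finset.mem_erase.mpr ⟨fun h => hr.2 (h ▸ ha), Finset.mem_univ a⟩
        · exact Finset.card_pair (h1 r hr.1)
      · intro r hr s hs hrs
        simp only [Finset.mem_filter, Finset.mem_range] at hr hs
        by_contra hne
        exact h3 r hr.1 s hs.1 hne hrs
      · intro t ht
        rw [Finset.mem_powersetCard] at ht
        obtain ⟨i, j, hij, rfl⟩ := Finset.card_eq_two.mp ht.2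
        obtain ⟨r, hr, hr2⟩ := h2 i j hij
        refine ⟨r, ?_, hr2⟩
        simp only [Finset.mem_filter, Finset.mem_range]
        refine ⟨hr, ?_⟩
        intro hmem
        simp only [hps] at hmem
        rw [hr2] at hmem
        exact (Finset.mem_erase.mp (ht.1 hmem)).1 rfl
    rw [this, Finset.card_powersetCard, Finset.card_erase_of_mem (Finset.mem_univ n₀),
      Finset.card_univ, Fintype.card_fin]
  have hQP : Q < P := by omega
  -- unfold ordinalSpread
  have hspread : ordinalSpread pairs N = sInf {m | N ≤ (U m).card} := rfl
  constructor
  · rintro ⟨n₀, hdense⟩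
    -- cross-ordering: pairs avoiding n₀ come before pairs containing n₀
    have cross : ∀ s < P, n₀ ∉ ps s → ∀ r < P, n₀ ∈ ps r → s < r := by
      intro s hs hns r hr hnr
      by_contra hle
      push_neg at hle  -- r ≤ s
      have hds : dist (x (pairs s).1) (x (pairs s).2)
          ≤ dist (x (pairs r).1) (x (pairs r).2) := h4 r s hle hs
      -- dense gives the reverse
      have hab : (pairs r).1 ≠ (pairs r).2 := h1 r hr
      have hmk : (pairs s).1 ≠ (pairs s).2 := h1 s hs
      have hm0 : (pairs s).1 ≠ n₀ := fun h => hns (by simp [hps, h])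
      have hk0 : (pairs s).2 ≠ n₀ := fun h => hns (by simp [hps, h])
      have hdr : dist (x (pairs r).1) (x (pairs r).2)
          ≤ dist (x (pairs s).1) (x (pairs s).2) := by
        simp only [hps, Finset.mem_insert, Finset.mem_singleton] at hnr
        rcases hnr with h | h
        · rw [show (pairs r).1 = n₀ from h.symm, dist_comm]
          exact hdense (pairs r).2 (by rw [h]; exact hab.symm) _ _ hm0 hk0 hmk
        · rw [show (pairs r).2 = n₀ from h.symm]
          exact hdense (pairs r).1 (by rw [h]; exact hab) _ _ hm0 hk0 hmk
      have heq : dist (x (pairs r).1) (x (pairs r).2)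
          = dist (x (pairs s).1) (x (pairs s).2) := le_antisymm hdr hds
      have hsetne : ps r ≠ ps s := fun h => hns (h ▸ hnr)
      exact hdd _ _ _ _ hab hmk hsetne heq
    -- the avoiding positions are exactly range Q
    have hT : (Finset.range P).filter (fun r => n₀ ∉ ps r) = Finset.range Q := by
      symm
      apply Finset.eq_of_subset_of_card_le
      · intro m hm
        rw [Finset.mem_range] at hm
        have hmP : m < P := lt_trans hm hQP
        by_contra hmA
        simp only [Finset.mem_filter, Finset.mem_range, not_and, not_not] at hmA
        have hmem : n₀ ∈ ps m := hmA hmP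
        have hsub : (Finset.range P).filter (fun r => n₀ ∉ ps r) ⊆ Finset.range m := by
          intro a ha
          simp only [Finset.mem_filter, Finset.mem_range] at ha
          exact Finset.mem_range.mpr (cross a ha.1 ha.2 m hmP hmem)
        have := Finset.card_le_card hsub
        rw [cardT n₀, Finset.card_range] at this
        omega
      · rw [cardT n₀, Finset.card_range]
    have hn0Q : ∀ r < Q, n₀ ∉ ps r := by
      intro r hr
      have : r ∈ (Finset.range P).filter (fun r => n₀ ∉ ps r) := by
        rw [hT]; exact Finset.mem_range.mpr hr
      exact (Finset.mem_filter.mp this).2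
    have hUQ : U Q ⊆ Finset.univ.erase n₀ := by
      intro a ha
      rw [hU, Finset.mem_biUnion] at ha
      obtain ⟨r, hr, har⟩ := ha
      rw [Finset.mem_range] at hr
      exact Finset.mem_erase.mpr ⟨fun h => hn0Q r hr (h ▸ har), Finset.mem_univ a⟩
    have hQmem : n₀ ∈ ps Q := by
      by_contra hnot
      have : Q ∈ (Finset.range P).filter (fun r => n₀ ∉ ps r) :=
        Finset.mem_filter.mpr ⟨Finset.mem_range.mpr hQP, hnot⟩
      rw [hT, Finset.mem_range] at this
      omega
    -- N ≤ card (U (Q+1))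
    have hcover : N ≤ (U (Q + 1)).card := by
      rcases eq_or_lt_of_le hN with hN2 | hN3
      · -- N = 2
        have hQ0 : Q = 0 := by rw [hQ, ← hN2]; rfl
        have hsub : ps 0 ⊆ U 1 := by
          intro a ha
          rw [hU, Finset.mem_biUnion]
          exact ⟨0, by simp, ha⟩
        have hc2 := Finset.card_le_card hsub
        rw [Finset.card_pair (h1 0 (by omega))] at hc2
        rw [hQ0, zero_add]
        omega
      · -- N ≥ 3
        have huniv : Finset.univ ⊆ U (Q + 1) := by
          intro i _
          by_cases hi : i = n₀
          · rw [hU, Finset.mem_biUnion]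
            exact ⟨Q, by simp, hi ▸ hQmem⟩
          · have hne : (((Finset.univ : Finset (Fin N)).erase n₀).erase i).Nonempty := by
              rw [← Finset.card_pos, Finset.card_erase_of_mem
                (Finset.mem_erase.mpr ⟨hi, Finset.mem_univ i⟩),
                Finset.card_erase_of_mem (Finset.mem_univ n₀),
                Finset.card_univ, Fintype.card_fin]
              omega
            obtain ⟨j, hj⟩ := hne
            rw [Finset.mem_erase, Finset.mem_erase] at hj
            obtain ⟨r, hr, hr2⟩ := h2 j i hj.1
            have hrQ : r < Q := by
              have : r ∈ (Finset.range P).filter (fun r => n₀ ∉ ps r) := by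
                refine Finset.mem_filter.mpr ⟨Finset.mem_range.mpr hr, ?_⟩
                rw [hps]
                simp only [hr2, Finset.mem_insert, Finset.mem_singleton]
                push_neg
                exact ⟨fun h => hj.2.1 h.symm, fun h => hi h.symm⟩
              rw [hT, Finset.mem_range] at this
              exact this
            rw [hU, Finset.mem_biUnion]
            refine ⟨r, Finset.mem_range.mpr (by omega), ?_⟩
            rw [hps]
            simp [hr2]
        have := Finset.card_le_card huniv
        rwa [Finset.card_univ, Fintype.card_fin] at this
    rw [hspread]
    have hle : sInf {m | N ≤ (U m).card} ≤ Q + 1 := Nat.sInf_le hcover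
    have hmem : N ≤ (U (sInf {m | N ≤ (U m).card})).card :=
      Nat.sInf_mem (⟨Q + 1, hcover⟩ : {m | N ≤ (U m).card}.Nonempty)
    have hgt : ¬ sInf {m | N ≤ (U m).card} ≤ Q := by
      intro h
      have hsub : U (sInf {m | N ≤ (U m).card}) ⊆ Finset.univ.erase n₀ := by
        refine subset_trans ?_ hUQ
        exact Finset.biUnion_subset_biUnion_of_subset_left ps
          (Finset.range_subset_range.mpr h)
      have hcard := Finset.card_le_card hsub
      rw [Finset.card_erase_of_mem (Finset.mem_univ n₀), Finset.card_univ,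
        Fintype.card_fin] at hcard
      omega
    omega
  · intro heq
    rw [hspread] at heq
    -- Q is not in the set
    have hQnot : ¬ N ≤ (U Q).card := by
      intro h
      have := Nat.sInf_le (show Q ∈ {m | N ≤ (U m).card} from h)
      omega
    push_neg at hQnot
    -- get n₀ not in U Q
    have hne : U Q ≠ Finset.univ := by
      intro h
      rw [h, Finset.card_univ, Fintype.card_fin] at hQnot
      omega
    have hex : ∃ n₀ : Fin N, n₀ ∉ U Q := by
      by_contra h
      push_neg at h
      exact hne (Finset.eq_univ_iff_forall.mpr h)
    obtain ⟨n₀, hn₀⟩ := hex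
    have hn0Q : ∀ r < Q, n₀ ∉ ps r := by
      intro r hr har
      exact hn₀ (Finset.mem_biUnion.mpr ⟨r, Finset.mem_range.mpr hr, har⟩)
    -- the avoiding positions are exactly range Q
    have hT : (Finset.range P).filter (fun r => n₀ ∉ ps r) = Finset.range Q := by
      symm
      apply Finset.eq_of_subset_of_card_le
      · intro m hm
        rw [Finset.mem_range] at hm
        exact Finset.mem_filter.mpr ⟨Finset.mem_range.mpr (lt_trans hm hQP), hn0Q m hm⟩
      · rw [cardT n₀, Finset.card_range]
    refine ⟨n₀, fun n hn m k hm hk hmk => ?_⟩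
    obtain ⟨r, hr, hr2⟩ := h2 n n₀ hn
    obtain ⟨s, hs, hs2⟩ := h2 m k hmk
    have hsQ : s < Q := by
      have : s ∈ (Finset.range P).filter (fun r => n₀ ∉ ps r) := by
        refine Finset.mem_filter.mpr ⟨Finset.mem_range.mpr hs, ?_⟩
        rw [hps]
        simp only [hs2, Finset.mem_insert, Finset.mem_singleton]
        push_neg
        exact ⟨fun h => hm h.symm, fun h => hk h.symm⟩
      rw [hT, Finset.mem_range] at this
      exact this
    have hrQ : Q ≤ r := by
      by_contra h
      push_neg at h
      apply hn0Q r h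
      rw [hps]
      simp [hr2]
    have hd := h4 s r (by omega) hr
    rw [pair_dist_eq x (h1 r hr) hr2, pair_dist_eq x (h1 s hs) hs2] at hd
    exact hd
end

section
/- For every N ∈ ℕ, there exists an ordinally dense set of N points in the hyperbolic plane; that is, there exist N points such that one of them satisfies: its maximum distance to the other N-1 points is at most the minimum pairwise distance among those N-1 points. Consequently, the ordinal capacity of hyperbolic space is infinite. -/
/-- Inverse hyperbolic cosine (for `1 ≤ x`). -/
noncomputable def arcosh (x : ℝ) : ℝ := Real.log (x + Real.sqrt (x ^ 2 - 1))

/-- Lorentzian inner product on ℝ³. -/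
def lorentz (x y : ℝ × ℝ × ℝ) : ℝ :=
  -(x.1 * y.1) + x.2.1 * y.2.1 + x.2.2 * y.2.2

/-- Hyperbolic distance in the hyperboloid ('Loid) model L². -/
noncomputable def hypDist (x y : ℝ × ℝ × ℝ) : ℝ :=
  arcosh (-(lorentz x y))

/-- Membership in the hyperboloid model L². -/
def onHyperboloid (x : ℝ × ℝ × ℝ) : Prop :=
  lorentz x x = -1 ∧ 0 < x.1

lemma arcosh_mono {a b : ℝ} (ha : 1 ≤ a) (hab : a ≤ b) : arcosh a ≤ arcosh b := by
  unfold arcosh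
  have h1 : (0:ℝ) < a + Real.sqrt (a ^ 2 - 1) := by
    have := Real.sqrt_nonneg (a ^ 2 - 1); linarith
  apply Real.log_le_log h1
  have h2 : Real.sqrt (a ^ 2 - 1) ≤ Real.sqrt (b ^ 2 - 1) := by
    apply Real.sqrt_le_sqrt; nlinarith
  linarith

set_option maxHeartbeats 1600000 in
theorem hyperbolic_ordinally_dense_sets_of_all_sizes (N : ℕ) (hN : 1 ≤ N) :
    ∃ x : Fin N → ℝ × ℝ × ℝ,
      (∀ n, onHyperboloid (x n)) ∧ Function.Injective x ∧
      -- the set is ordinally dense in the hyperbolic plane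
      ∃ n₀ : Fin N, ∀ n, n ≠ n₀ → ∀ m k : Fin N, m ≠ n₀ → k ≠ n₀ → m ≠ k →
        hypDist (x n) (x n₀) ≤ hypDist (x m) (x k) := by
  have hπ := Real.pi_pos
  obtain ⟨D, hDdef⟩ : ∃ D : ℕ, D = max (N - 2) 1 := ⟨_, rfl⟩
  have hD1 : 1 ≤ D := hDdef ▸ le_max_right _ _
  have hDpos : (0:ℝ) < (D:ℝ) := by exact_mod_cast hD1
  have hπD_pos : 0 < Real.pi / D := by positivity
  have hπD_le : Real.pi / D ≤ Real.pi := by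
    rw [div_le_iff₀ hDpos]
    nlinarith [(by exact_mod_cast hD1 : (1:ℝ) ≤ (D:ℝ))]
  obtain ⟨δ, hδdef⟩ : ∃ δ : ℝ, δ = 1 - Real.cos (Real.pi / D) := ⟨_, rfl⟩
  have hδpos : 0 < δ := by
    have h := Real.strictAntiOn_cos (Set.mem_Icc.mpr ⟨le_refl 0, Real.pi_nonneg⟩)
      (Set.mem_Icc.mpr ⟨le_of_lt hπD_pos, hπD_le⟩) hπD_pos
    simp only [Real.cos_zero] at h
    rw [hδdef]; linarith
  obtain ⟨c, hcdef⟩ : ∃ c : ℝ, c = 1 + 2 / δ := ⟨_, rfl⟩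
  have hc1 : 1 < c := by
    have : 0 < 2 / δ := by positivity
    rw [hcdef]; linarith
  have hcδ : (c - 1) * δ = 2 := by
    rw [hcdef]; field_simp; ring
  obtain ⟨s, hsdef⟩ : ∃ s : ℝ, s = Real.sqrt (c ^ 2 - 1) := ⟨_, rfl⟩
  have hs2 : s ^ 2 = c ^ 2 - 1 := by rw [hsdef]; exact Real.sq_sqrt (by nlinarith)
  have hspos : 0 < s := by rw [hsdef]; exact Real.sqrt_pos.mpr (by nlinarith)
  obtain ⟨a, hadef⟩ : ∃ a : ℕ → ℝ, a = fun k : ℕ => (k : ℝ) * Real.pi / D := ⟨fun k : ℕ => (k : ℝ) * Real.pi / D, rfl⟩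
  obtain ⟨x, hxdef⟩ : ∃ x : Fin N → ℝ × ℝ × ℝ, x = fun n =>
      if n.val = 0 then ((1:ℝ), (0:ℝ), (0:ℝ))
      else (c, s * Real.cos (a (n.val - 1)), s * Real.sin (a (n.val - 1))) := ⟨_, rfl⟩
  have hIdx : ∀ n : Fin N, n.val ≠ 0 → (n.val - 1 : ℕ) ≤ D := by
    intro n hn
    have := n.isLt
    omega
  have ha_mem : ∀ k : ℕ, k ≤ D → a k ∈ Set.Icc 0 Real.pi := by
    intro k hk
    rw [hadef]
    constructor
    · positivity
    · rw [div_le_iff₀ hDpos]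
      have : (k:ℝ) ≤ (D:ℝ) := by exact_mod_cast hk
      nlinarith
  refine ⟨x, ?_, ?_, ⟨0, by omega⟩, ?_⟩
  · intro n
    by_cases hn : n.val = 0
    · simp [hxdef, hn, onHyperboloid, lorentz]
    · constructor
      · simp only [hxdef, if_neg hn, lorentz]
        have := Real.sin_sq_add_cos_sq (a (n.val - 1))
        nlinarith
      · simp only [hxdef, if_neg hn]
        linarith
  · intro n m hnm
    by_cases hn : n.val = 0 <;> by_cases hm : m.val = 0
    · exact Fin.ext (by omega)
    · exfalso
      have : (x n).1 = (x m).1 := by rw [hnm]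
      simp [hxdef, hn, hm] at this
      linarith
    · exfalso
      have : (x n).1 = (x m).1 := by rw [hnm]
      simp [hxdef, hn, hm] at this
      linarith
    · have h2 : (x n).2.1 = (x m).2.1 := by rw [hnm]
      simp only [hxdef, if_neg hn, if_neg hm] at h2
      have hcc : Real.cos (a (n.val - 1)) = Real.cos (a (m.val - 1)) :=
        mul_left_cancel₀ (ne_of_gt hspos) h2
      have heq : a (n.val - 1) = a (m.val - 1) :=
        Real.injOn_cos (ha_mem _ (hIdx n hn)) (ha_mem _ (hIdx m hm)) hcc
      rw [hadef] at heq
      simp only at heq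
      have hAB : ((n.val - 1 : ℕ) : ℝ) = ((m.val - 1 : ℕ) : ℝ) := by
        have h1 := congrArg (fun t => t * (D:ℝ)) heq
        simp only [div_mul_cancel₀ _ (ne_of_gt hDpos)] at h1
        exact mul_right_cancel₀ (ne_of_gt hπ) h1
      have : (n.val - 1 : ℕ) = (m.val - 1 : ℕ) := by exact_mod_cast hAB
      exact Fin.ext (by omega)
  · intro n hn m k hm hk hmk
    have hn0 : n.val ≠ 0 := fun h => hn (Fin.ext (by simpa using h))
    have hm0 : m.val ≠ 0 := fun h => hm (Fin.ext (by simpa using h))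
    have hk0 : k.val ≠ 0 := fun h => hk (Fin.ext (by simpa using h))
    have hxn0 : -(lorentz (x n) (x ⟨0, by omega⟩)) = c := by
      simp [hxdef, hn0, lorentz]
    have hxmk : -(lorentz (x m) (x k)) =
        c ^ 2 - s ^ 2 * Real.cos (a (m.val - 1) - a (k.val - 1)) := by
      simp only [hxdef, if_neg hm0, if_neg hk0, lorentz, Real.cos_sub]
      ring
    have hcosbound : Real.cos (a (m.val - 1) - a (k.val - 1)) ≤ 1 - δ := by
      rw [← Real.cos_abs]
      have habs : |a (m.val - 1) - a (k.val - 1)|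
          = |((m.val - 1 : ℕ) : ℝ) - ((k.val - 1 : ℕ) : ℝ)| * Real.pi / D := by
        rw [hadef]
        simp only
        rw [div_sub_div_same, ← sub_mul, abs_div, abs_mul, abs_of_pos hπ, abs_of_pos hDpos]
      have hne : (m.val - 1 : ℕ) ≠ (k.val - 1 : ℕ) := by
        intro h
        exact hmk (Fin.ext (by omega))
      have h1le : (1:ℝ) ≤ |((m.val - 1 : ℕ) : ℝ) - ((k.val - 1 : ℕ) : ℝ)| := by
        rcases hne.lt_or_gt with h | h
        · have h' : ((m.val - 1 : ℕ) : ℝ) + 1 ≤ ((k.val - 1 : ℕ) : ℝ) := by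
            exact_mod_cast Nat.succ_le_of_lt h
          rw [abs_sub_comm, abs_of_nonneg (by linarith)]; linarith
        · have h' : ((k.val - 1 : ℕ) : ℝ) + 1 ≤ ((m.val - 1 : ℕ) : ℝ) := by
            exact_mod_cast Nat.succ_le_of_lt h
          rw [abs_of_nonneg (by linarith)]; linarith
      have hDle : |((m.val - 1 : ℕ) : ℝ) - ((k.val - 1 : ℕ) : ℝ)| ≤ (D:ℝ) := by
        have h1 : ((m.val - 1 : ℕ) : ℝ) ≤ (D:ℝ) := by exact_mod_cast hIdx m hm0
        have h2 : ((k.val - 1 : ℕ) : ℝ) ≤ (D:ℝ) := by exact_mod_cast hIdx k hk0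
        have h3 : (0:ℝ) ≤ ((m.val - 1 : ℕ) : ℝ) := Nat.cast_nonneg _
        have h4 : (0:ℝ) ≤ ((k.val - 1 : ℕ) : ℝ) := Nat.cast_nonneg _
        rw [abs_le]; constructor <;> linarith
      have hlow : Real.pi / D ≤ |a (m.val - 1) - a (k.val - 1)| := by
        rw [habs, div_le_div_iff₀ hDpos hDpos]
        nlinarith [mul_le_mul_of_nonneg_right
          (mul_le_mul_of_nonneg_right h1le (le_of_lt hπ)) (le_of_lt hDpos)]
      have hhigh : |a (m.val - 1) - a (k.val - 1)| ≤ Real.pi := by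
        rw [habs, div_le_iff₀ hDpos]
        nlinarith [mul_le_mul_of_nonneg_right hDle (le_of_lt hπ)]
      have := Real.cos_le_cos_of_nonneg_of_le_pi (le_of_lt hπD_pos) hhigh hlow
      rw [hδdef]
      linarith
    have hcle : c ≤ c ^ 2 - s ^ 2 * Real.cos (a (m.val - 1) - a (k.val - 1)) := by
      have hs2nn : (0:ℝ) ≤ s ^ 2 := sq_nonneg s
      have h1 := mul_le_mul_of_nonneg_left hcosbound hs2nn
      have h4 : s ^ 2 * (1 - δ) = c ^ 2 - 1 - 2 * (c + 1) := by
        have h5 : s ^ 2 * (1 - δ) = c ^ 2 - 1 - (c + 1) * ((c - 1) * δ) := by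
          rw [hs2]; ring
        rw [hcδ] at h5; linarith
      linarith
    show arcosh (-(lorentz (x n) (x ⟨0, by omega⟩))) ≤ arcosh (-(lorentz (x m) (x k)))
    rw [hxn0, hxmk]
    exact arcosh_mono (le_of_lt hc1) hcle
end

section
/- Let y_1,...,y_{N-1} ∈ ℝ^d with 0 < ‖y_n‖ ≤ 1 for all n, and suppose ‖y_i - y_j‖ ≥ 1 for some i ≠ j. Then the radially projected points x_i = y_i/‖y_i‖ and x_j = y_j/‖y_j‖ satisfy ‖x_i - x_j‖ ≥ ‖y_i - y_j‖. In other words, radial projection onto the unit sphere does not decrease distances between points whose mutual distance is at least 1 and whose norms are at most 1. -/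
theorem radial_projection_expands_far_pairs (d N : ℕ)
    (y : Fin (N - 1) → EuclideanSpace ℝ (Fin d))
    (hne : ∀ n, y n ≠ 0) (hnorm : ∀ n, ‖y n‖ ≤ 1)
    (i j : Fin (N - 1)) (hij : i ≠ j) (hfar : 1 ≤ ‖y i - y j‖) :
    ‖y i - y j‖ ≤ ‖(‖y i‖⁻¹) • y i - (‖y j‖⁻¹) • y j‖ := by
  set a := ‖y i‖ with ha'
  set b := ‖y j‖ with hb'
  have ha : 0 < a := norm_pos_iff.mpr (hne i)
  have hb : 0 < b := norm_pos_iff.mpr (hne j)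
  have ha1 : a ≤ 1 := hnorm i
  have hb1 : b ≤ 1 := hnorm j
  set t := (inner ℝ (y i) (y j) : ℝ) with ht'
  have hcs : t ≤ a * b := real_inner_le_norm (y i) (y j)
  have hsq1 : ‖y i - y j‖ ^ 2 = a ^ 2 - 2 * t + b ^ 2 := by
    rw [@norm_sub_sq_real]
  have hsq2 : ‖(‖y i‖⁻¹) • y i - (‖y j‖⁻¹) • y j‖ ^ 2
      = 2 - 2 * (a⁻¹ * b⁻¹ * t) := by
    rw [@norm_sub_sq_real]
    rw [norm_smul, norm_smul, real_inner_smul_left, real_inner_smul_right]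
    simp only [Real.norm_eq_abs, abs_inv, abs_norm]
    rw [← ha', ← hb', ← ht']
    field_simp
    ring
  have hfar2 : 1 ≤ a ^ 2 - 2 * t + b ^ 2 := by
    rw [← hsq1]
    nlinarith [norm_nonneg (y i - y j)]
  have key : ‖y i - y j‖ ^ 2 ≤ ‖(‖y i‖⁻¹) • y i - (‖y j‖⁻¹) • y j‖ ^ 2 := by
    rw [hsq1, hsq2]
    have hab : 0 < a * b := mul_pos ha hb
    have h1 : a⁻¹ * b⁻¹ * t = t / (a * b) := by field_simp
    rw [h1]
    have hA : a * b ≤ 1 := mul_le_one₀ ha1 hb.le hb1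
    have hgoal : a * b * (a ^ 2 + b ^ 2 - 2) ≤ 2 * t * (a * b - 1) := by
      nlinarith [mul_nonneg (show (0:ℝ) ≤ a ^ 2 + b ^ 2 - 1 - 2 * t by linarith)
          (show (0:ℝ) ≤ 1 - a * b by linarith),
        mul_nonneg (sub_nonneg.mpr ha1) (sub_nonneg.mpr hb1),
        mul_nonneg ha.le (sub_nonneg.mpr ha1), mul_nonneg hb.le (sub_nonneg.mpr hb1)]
    have h4 : 2 - (a ^ 2 - 2 * t + b ^ 2 + 2 * (t / (a * b)))
        = (2 * t * (a * b - 1) - a * b * (a ^ 2 + b ^ 2 - 2)) / (a * b) := by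
      field_simp
      ring
    have h5 : 0 ≤ (2 * t * (a * b - 1) - a * b * (a ^ 2 + b ^ 2 - 2)) / (a * b) :=
      div_nonneg (by linarith) hab.le
    linarith
  nlinarith [norm_nonneg ((‖y i‖⁻¹) • y i - (‖y j‖⁻¹) • y j), norm_nonneg (y i - y j), key]
end
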